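/- Let G be a chordal graph with terminal set T ⊆ V(G), let k be a nonnegative integer, and let t ∈ T be a simplicial vertex of G with closed neighbourhood N[t] = {t, x, y, z} of size four. Then G has a subset feedback vertex set with respect to T of size at most k if and only if G has a subset feedback vertex set S with respect to T of size at most k such that either t ∉ S, or t ∈ S and none of x, y, z belongs to S. -/

import Mathlib

open SimpleGraph

variable {V : Type*}

/-- A `T`-triangle, represented as its vertex set: three pairwise adjacent
vertices at least one of which is a terminal. -/
def IsTTriangle (G : SimpleGraph V) (T Δ : Set V) : Prop :=
  ∃ a b c : V, Δ = {a, b, c} ∧ G.Adj a b ∧ G.Adj a c ∧ G.Adj b c ∧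
    (a ∈ T ∨ b ∈ T ∨ c ∈ T)

/-- The induced subgraph `G − S` contains a `T`-triangle. -/
def HasTTriangleAvoiding (G : SimpleGraph V) (T S : Set V) : Prop :=
  ∃ Δ : Set V, IsTTriangle G T Δ ∧ Δ ∩ S = ∅

/-- The induced subgraph `G − S` contains a `T`-cycle: a cycle of `G` avoiding
`S` and passing through a vertex of `T`. -/
def HasTCycleAvoiding (G : SimpleGraph V) (T S : Set V) : Prop :=
  ∃ (v : V) (c : G.Walk v v), c.IsCycle ∧ (∀ x ∈ c.support, x ∉ S) ∧
    ∃ t ∈ T, t ∈ c.support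

/-- `S` is a subset feedback vertex set of `G` with respect to `T`:
`G − S` contains no `T`-cycle. -/
def IsSubsetFVS (G : SimpleGraph V) (T S : Set V) : Prop :=
  ¬ HasTCycleAvoiding G T S

/-- A cycle has a chord: an edge of `G` between two vertices of the cycle
which is not an edge of the cycle. -/
def WalkHasChord (G : SimpleGraph V) {v : V} (c : G.Walk v v) : Prop :=
  ∃ x y : V, x ∈ c.support ∧ y ∈ c.support ∧ G.Adj x y ∧ s(x, y) ∉ c.edges

/-- A graph is chordal if every cycle of length at least four has a chord. -/
def Chordal (G : SimpleGraph V) : Prop :=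
  ∀ (v : V) (c : G.Walk v v), c.IsCycle → 4 ≤ c.length → WalkHasChord G c

/-- A bridge: an edge lying on no cycle of the graph. -/
def IsBridgeEdge (G : SimpleGraph V) (e : Sym2 V) : Prop :=
  e ∈ G.edgeSet ∧ ∀ (v : V) (c : G.Walk v v), c.IsCycle → e ∉ c.edges

/-- `(K, I)` is a split partition of `G`: `K` is a clique, `I` an independent
set, and they partition the vertex set. -/
def IsSplitPartition (G : SimpleGraph V) (K I : Set V) : Prop :=
  K ∪ I = Set.univ ∧ K ∩ I = ∅ ∧ G.IsClique K ∧ I.Pairwise fun a b => ¬ G.Adj a b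

/-- The closed neighbourhood `N[v]` of a vertex. -/
def closedNbhd (G : SimpleGraph V) (v : V) : Set V := insert v (G.neighborSet v)

/-- A vertex is simplicial if its closed neighbourhood is a clique. -/
def IsSimplicial (G : SimpleGraph V) (v : V) : Prop := G.IsClique (closedNbhd G v)

/-- A maximal clique. -/
def IsMaxClique (G : SimpleGraph V) (C : Set V) : Prop :=
  G.IsClique C ∧ ∀ C' : Set V, G.IsClique C' → C ⊆ C' → C' = C

/-- A matching, as a set of edges of `G` no two of which share an endvertex. -/
def IsEdgeMatching (G : SimpleGraph V) (M : Set (Sym2 V)) : Prop :=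
  M ⊆ G.edgeSet ∧ ∀ e ∈ M, ∀ f ∈ M, e ≠ f → ∀ z : V, z ∈ e → z ∉ f

/-- A set of edges saturates a vertex if some edge of it is incident with it. -/
def Saturates (M : Set (Sym2 V)) (z : V) : Prop := ∃ e ∈ M, z ∈ e

/-- `M` is a `t`-expansion of `X` into `Y`: every edge of `M` goes between `X`
and `Y`, every vertex of `X` is incident with exactly `t` edges of `M`, and the
edges of `M` are incident with exactly `t * |X|` distinct vertices of `Y`. -/
def IsExpansion (G : SimpleGraph V) (t : ℕ) (X Y : Set V) (M : Set (Sym2 V)) : Prop :=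
  M ⊆ G.edgeSet ∧ (∀ e ∈ M, ∃ x ∈ X, ∃ y ∈ Y, e = s(x, y)) ∧
    (∀ x ∈ X, {e ∈ M | x ∈ e}.ncard = t) ∧
    {y ∈ Y | Saturates M y}.ncard = t * X.ncard


lemma getVert_mem_support' {G : SimpleGraph V} {u v : V} (p : G.Walk u v) (i : ℕ) :
    p.getVert i ∈ p.support := by
  induction p generalizing i with
  | nil => cases i <;> simp [Walk.getVert]
  | cons h q ih =>
    cases i with
    | zero => simp [Walk.getVert]
    | succ n => rw [Walk.getVert_cons_succ]; simp [Walk.support_cons, ih n]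

/-- a cycle based at `t` visits two distinct neighbours of `t`. -/
lemma cycle_two_nbrs {G : SimpleGraph V} {t : V} {c : G.Walk t t} (hc : c.IsCycle) :
    ∃ a b : V, a ≠ b ∧ G.Adj t a ∧ G.Adj t b ∧ a ∈ c.support ∧ b ∈ c.support := by
  cases c with
  | nil => exact absurd hc (Walk.IsCycle.not_of_nil)
  | cons h q =>
    have hq : q.IsPath := ((Walk.cons_isCycle_iff q h).mp hc).1
    have hlen : 3 ≤ q.length + 1 := by simpa using hc.three_le_length
    cases q with
    | nil => simp at hlen
    | cons h2 q2 =>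
      rename_i u u2
      have hq2len : 1 ≤ q2.length := by simpa using hlen
      set w := q2.getVert (q2.length - 1) with hw
      have hwadj : G.Adj w t := by
        have := (Walk.cons h2 q2).adj_getVert_succ
          (i := (Walk.cons h2 q2).length - 1) (by simp)
        simp only [Walk.length_cons] at this
        rw [show q2.length + 1 - 1 = (q2.length - 1) + 1 from by omega] at this
        rw [Walk.getVert_cons_succ, Walk.getVert_cons_succ] at this
        rwa [show q2.length - 1 + 1 = q2.length from by omega, Walk.getVert_length] at this
      have hwmem : w ∈ q2.support := getVert_mem_support' q2 _
      have hunot : u ∉ q2.support := ((Walk.cons_isPath_iff h2 q2).mp hq).2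
      refine ⟨u, w, fun hwu => hunot (hwu ▸ hwmem), h, hwadj.symm, ?_, ?_⟩
      · simp [Walk.support_cons]
      · simp [Walk.support_cons, hwmem]

lemma cycle_two_nbrs' {G : SimpleGraph V} {v t : V} {c : G.Walk v v} (hc : c.IsCycle)
    (ht : t ∈ c.support) :
    ∃ a b : V, a ≠ b ∧ G.Adj t a ∧ G.Adj t b ∧ a ∈ c.support ∧ b ∈ c.support := by
  classical
  obtain ⟨a, b, hab, ha, hb, hma, hmb⟩ := cycle_two_nbrs (hc.rotate ht)
  have hrot := Walk.support_rotate c t ht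
  have key : ∀ x : V, x ∈ (c.rotate t ht).support → x ∈ c.support := by
    intro x hx
    rw [Walk.support_eq_cons, List.mem_cons] at hx
    rcases hx with rfl | hx
    · exact ht
    · exact List.mem_of_mem_tail (hrot.mem_iff.mp hx)
  exact ⟨a, b, hab, ha, hb, key a hma, key b hmb⟩

lemma replace_lemma {G : SimpleGraph V} {T : Set V} {t x y z : V}
    (hC : (insert t (G.neighborSet t) : Set V) = {t, x, y, z})
    (htx : t ≠ x) (hty : t ≠ y) (htz : t ≠ z)
    (hxy : x ≠ y) (hxz : x ≠ z) (hyz : y ≠ z)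
    {S : Set V} (hS : IsSubsetFVS G T S) (a b : V)
    (ha : a ∈ ({x, y, z} : Set V)) (hb : b ∈ ({x, y, z} : Set V))
    (hab : a ≠ b) (haS : a ∈ S) :
    IsSubsetFVS G T (insert b (S \ {t})) := by
  rintro ⟨v, c, hcyc, havoid, t', ht'T, ht'c⟩
  by_cases htc : t ∈ c.support
  · obtain ⟨u, w, huw, hadju, hadjw, humem, hwmem⟩ := cycle_two_nbrs' hcyc htc
    have hta : t ∉ ({x, y, z} : Set V) := by
      simp only [Set.mem_insert_iff, Set.mem_singleton_iff]
      push_neg; exact ⟨htx, hty, htz⟩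
    have hmemN : ∀ q : V, G.Adj t q → q ∈ ({x, y, z} : Set V) := by
      intro q hq
      have : q ∈ (insert t (G.neighborSet t) : Set V) := Or.inr hq
      rw [hC] at this
      rcases this with rfl | h
      · exact absurd rfl hq.ne
      · exact h
    have hu3 := hmemN u hadju
    have hw3 := hmemN w hadjw
    have hanS : a ∈ S \ {t} := ⟨haS, fun h => hta (h ▸ ha)⟩
    have hune : u ∉ insert b (S \ {t}) := havoid u humem
    have hwne : w ∉ insert b (S \ {t}) := havoid w hwmem
    have hua : u ≠ a := fun h => hune (Or.inr (h ▸ hanS))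
    have hwa : w ≠ a := fun h => hwne (Or.inr (h ▸ hanS))
    have hub : u ≠ b := fun h => hune (Or.inl h)
    have hwb : w ≠ b := fun h => hwne (Or.inl h)
    simp only [Set.mem_insert_iff, Set.mem_singleton_iff] at ha hb hu3 hw3
    apply huw
    rcases hu3 with rfl | rfl | rfl <;> rcases hw3 with rfl | rfl | rfl <;>
      rcases ha with rfl | rfl | rfl <;> rcases hb with rfl | rfl | rfl <;> tauto
  · apply hS
    refine ⟨v, c, hcyc, ?_, t', ht'T, ht'c⟩
    intro q hq hqS
    have hqt : q ≠ t := fun h => htc (h ▸ hq)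
    exact havoid q hq (Or.inr ⟨hqS, hqt⟩)

/-- existence of a solution of size at most `k` is equivalent to
existence of one that either avoids `t` or contains `t` and none of its
neighbours `x, y, z`. -/
theorem stmt15 {V : Type} [Fintype V] (G : SimpleGraph V) (T : Set V)
    (hG : Chordal G) (k : ℕ) (t x y z : V) (ht : t ∈ T)
    (hsimp : IsSimplicial G t)
    (hC : closedNbhd G t = {t, x, y, z})
    (hcard : ({t, x, y, z} : Set V).ncard = 4) :
    (∃ S : Set V, IsSubsetFVS G T S ∧ S.ncard ≤ k) ↔
    (∃ S : Set V, IsSubsetFVS G T S ∧ S.ncard ≤ k ∧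
      (t ∉ S ∨ (t ∈ S ∧ x ∉ S ∧ y ∉ S ∧ z ∉ S))) := by
  have hC' : (insert t (G.neighborSet t) : Set V) = {t, x, y, z} := hC
  have h3 : ∀ p q r : V, ({p, q, r} : Set V).ncard ≤ 3 := by
    intro p q r
    calc ({p, q, r} : Set V).ncard ≤ ({q, r} : Set V).ncard + 1 := Set.ncard_insert_le _ _
      _ ≤ ({r} : Set V).ncard + 1 + 1 := by
          exact Nat.add_le_add_right (Set.ncard_insert_le _ _) 1
      _ ≤ 3 := by simp
  have htx : t ≠ x := by
    intro h
    rw [show ({t, x, y, z} : Set V) = {x, y, z} from by ext w; simp [h]] at hcard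
    have := h3 x y z; omega
  have hty : t ≠ y := by
    intro h
    rw [show ({t, x, y, z} : Set V) = {x, y, z} from by ext w; simp [h]] at hcard
    have := h3 x y z; omega
  have htz : t ≠ z := by
    intro h
    rw [show ({t, x, y, z} : Set V) = {x, y, z} from by ext w; simp [h]] at hcard
    have := h3 x y z; omega
  have hxy : x ≠ y := by
    intro h
    rw [show ({t, x, y, z} : Set V) = {t, y, z} from by ext w; simp [h]] at hcard
    have := h3 t y z; omega
  have hxz : x ≠ z := by
    intro h
    rw [show ({t, x, y, z} : Set V) = {t, y, z} from by ext w; simp [h]] at hcard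
    have := h3 t y z; omega
  have hyz : y ≠ z := by
    intro h
    rw [show ({t, x, y, z} : Set V) = {t, x, z} from by ext w; simp [h]] at hcard
    have := h3 t x z; omega
  constructor
  · rintro ⟨S, hS, hk⟩
    by_cases htS : t ∈ S
    · have main : ∀ a b : V, a ∈ ({x, y, z} : Set V) → b ∈ ({x, y, z} : Set V) →
          a ≠ b → a ∈ S →
          ∃ S' : Set V, IsSubsetFVS G T S' ∧ S'.ncard ≤ k ∧
            (t ∉ S' ∨ (t ∈ S' ∧ x ∉ S' ∧ y ∉ S' ∧ z ∉ S')) := by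
        intro a b ha hb hab haS
        have htb : t ≠ b := by
          rcases hb with rfl | rfl | rfl
          exacts [htx, hty, htz]
        refine ⟨insert b (S \ {t}),
          replace_lemma hC' htx hty htz hxy hxz hyz hS a b ha hb hab haS, ?_, Or.inl ?_⟩
        · calc (insert b (S \ {t})).ncard ≤ (S \ {t}).ncard + 1 := Set.ncard_insert_le _ _
            _ = S.ncard := Set.ncard_diff_singleton_add_one htS
            _ ≤ k := hk
        · rintro (h | ⟨_, hne⟩)
          · exact htb h
          · exact hne rfl
      by_cases hx : x ∈ S
      · exact main x y (by simp) (by simp) hxy hx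
      · by_cases hy : y ∈ S
        · exact main y x (by simp) (by simp) hxy.symm hy
        · by_cases hz : z ∈ S
          · exact main z x (by simp) (by simp) hxz.symm hz
          · exact ⟨S, hS, hk, Or.inr ⟨htS, hx, hy, hz⟩⟩
    · exact ⟨S, hS, hk, Or.inl htS⟩
  · rintro ⟨S, h1, h2, _⟩
    exact ⟨S, h1, h2⟩
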